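/- The Metropolis-Hastings combination matrix with weights a_{ℓk} = σ_k² / max{n_k σ_k², n_ℓ σ_ℓ²} for ℓ ∈ N_k, ℓ ≠ k (and diagonal completing each column to sum 1) has Perron vector p with entries p_k = σ_k^{-2} / (Σ_ℓ σ_ℓ^{-2}), i.e., A p = p. -/
import Mathlib


/-- the Metropolis-Hastings combination matrix on an undirected graph
has Perron vector `p_k = σ_k⁻² / ∑ σ_ℓ⁻²`, i.e. `A p = p`. -/
theorem metropolis_hastings_perron_vector
    (K : ℕ) (N : Fin K → Finset (Fin K)) (hself : ∀ k, k ∈ N k)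
    (hundir : ∀ k l, l ∈ N k ↔ k ∈ N l)
    (σ2 : Fin K → ℝ) (hσ : ∀ k, 0 < σ2 k)
    (A : Matrix (Fin K) (Fin K) ℝ)
    (hoff : ∀ k l, l ≠ k →
      A l k = if l ∈ N k then
        σ2 k / max (((N k).card : ℝ) * σ2 k) (((N l).card : ℝ) * σ2 l) else 0)
    (hdiag : ∀ k, A k k = 1 - ∑ m ∈ (N k).erase k, A m k) :
    let p : Fin K → ℝ := fun k => (σ2 k)⁻¹ / ∑ l, (σ2 l)⁻¹
    A.mulVec p = p := by
  intro p
  funext k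
  -- detailed balance
  have hbal : ∀ l, A k l * p l = A l k * p k := by
    intro l
    rcases eq_or_ne l k with rfl | hlk
    · rfl
    · have h1 := hoff l k (Ne.symm hlk)
      have h2 := hoff k l hlk
      rw [h1, h2]
      by_cases hmem : l ∈ N k
      · have hmem' : k ∈ N l := (hundir k l).mp hmem
        simp only [hmem, hmem', if_true]
        have hk := (hσ k).ne'
        have hl := (hσ l).ne'
        rw [max_comm (((N l).card : ℝ) * σ2 l)]
        simp only [p, div_mul_div_comm, mul_inv_cancel₀ hk, mul_inv_cancel₀ hl]
      · have hmem' : k ∉ N l := fun h => hmem ((hundir k l).mpr h)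
        simp [hmem, hmem']
  -- column sum is 1
  have hcol : ∑ l, A l k = 1 := by
    have hsub : ∑ l ∈ N k, A l k = ∑ l, A l k := by
      apply Finset.sum_subset (Finset.subset_univ _)
      intro x _ hx
      have hxk : x ≠ k := fun h => hx (h ▸ hself k)
      rw [hoff k x hxk, if_neg hx]
    rw [← hsub, ← Finset.add_sum_erase (N k) (fun m => A m k) (hself k),
      hdiag k]
    ring
  show ∑ l, A k l * p l = p k
  calc ∑ l, A k l * p l = ∑ l, A l k * p k := Finset.sum_congr rfl (fun l _ => hbal l)
    _ = (∑ l, A l k) * p k := by rw [Finset.sum_mul]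
    _ = p k := by rw [hcol, one_mul]
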